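/- Suppose Y : ℝ → ℝ satisfies Y' = -Y² + α. Then y = Y² satisfies the fifth-order KdV travelling-wave equation y'''' - 20yy'' - 10(y')² + 40y³ - 56α²y + 16α³ = 0. -/

import Mathlib

/-- If `Y` solves the Riccati equation, then `y = Y²` solves the fifth-order KdV
travelling-wave equation `y'''' - 20yy'' - 10(y')² + 40y³ - 56α²y + 16α³ = 0`. -/
theorem riccati_sq_solves_kdv5 (Y : ℝ → ℝ) (α : ℝ)
    (hY : Differentiable ℝ Y)
    (hRic : ∀ z, deriv Y z = -(Y z) ^ 2 + α)
    (y : ℝ → ℝ) (hydef : y = fun z => (Y z) ^ 2) :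
    ∀ z, deriv (deriv (deriv (deriv y))) z
      - 20 * y z * deriv (deriv y) z
      - 10 * (deriv y z) ^ 2
      + 40 * (y z) ^ 3 - 56 * α ^ 2 * y z + 16 * α ^ 3 = 0 := by
  have hY' : ∀ z, HasDerivAt Y (-(Y z) ^ 2 + α) z := by
    intro z
    have := (hY z).hasDerivAt
    rwa [hRic z] at this
  set y1 : ℝ → ℝ := fun z => -2 * (Y z) ^ 3 + 2 * α * Y z with hy1
  set y2 : ℝ → ℝ := fun z => 6 * (Y z) ^ 4 - 8 * α * (Y z) ^ 2 + 2 * α ^ 2 with hy2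
  set y3 : ℝ → ℝ := fun z => -24 * (Y z) ^ 5 + 40 * α * (Y z) ^ 3 - 16 * α ^ 2 * Y z with hy3
  have h1 : ∀ z, HasDerivAt y (y1 z) z := by
    intro z
    rw [hydef]
    have := (hY' z).fun_pow 2
    refine this.congr_deriv ?_
    simp [hy1]; ring
  have h2 : ∀ z, HasDerivAt y1 (y2 z) z := by
    intro z
    have := (((hY' z).fun_pow 3).const_mul (-2)).add (((hY' z).const_mul (2 * α)))
    refine this.congr_deriv ?_
    simp [hy2]; ring
  have h3 : ∀ z, HasDerivAt y2 (y3 z) z := by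
    intro z
    have := ((((hY' z).fun_pow 4).const_mul 6).sub (((hY' z).fun_pow 2).const_mul (8 * α))).add_const
      (2 * α ^ 2)
    refine this.congr_deriv ?_
    simp [hy3]; ring
  have h4 : ∀ z, HasDerivAt y3
      (120 * (Y z) ^ 6 - 240 * α * (Y z) ^ 4 + 136 * α ^ 2 * (Y z) ^ 2 - 16 * α ^ 3) z := by
    intro z
    have := ((((hY' z).fun_pow 5).const_mul (-24)).add (((hY' z).fun_pow 3).const_mul (40 * α))).sub
      ((hY' z).const_mul (16 * α ^ 2))
    refine this.congr_deriv ?_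
    ring
  have e1 : deriv y = y1 := funext fun z => (h1 z).deriv
  have e2 : deriv y1 = y2 := funext fun z => (h2 z).deriv
  have e3 : deriv y2 = y3 := funext fun z => (h3 z).deriv
  intro z
  rw [e1, e2, e3, (h4 z).deriv, hydef]
  simp only [hy1, hy2]
  ring
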